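/- arXiv:1806.10096 — 2 statements merged into one kernel-verified Lean document; each statement's English description precedes it below -/
import Mathlib

section
/- Let G = (V,E) be an infinite, locally finite tree (a connected acyclic simple graph) in which every vertex has degree at least 2, equipped with edge lengths ℓ : E → (0,∞) such that ℓ* := sup_{e∈E} ℓ(e) < ∞. For an edge e with endpoints u and v set c(e) := 1/ℓ(e) − 1/m(u) − 1/m(v). Suppose there exist ε > 0 and M₀ > 0 such that every star-like subgraph G̃ of G with mes(G̃) ≥ M₀ satisfies Σ_{e∈Ẽ} c(e)·ℓ(e) ≥ ε·mes(G̃). Then α(G) > 0. -/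
open scoped BigOperators

noncomputable section

variable {V : Type*}

/-- Total length of a set of edges. -/
def mes (ℓ : Sym2 V → ℝ) (E : Set (Sym2 V)) : ℝ := ∑ᶠ e ∈ E, ℓ e

/-- Weight `m(v)` of a vertex: total length of the edges incident to `v`. -/
def mval (G : SimpleGraph V) (ℓ : Sym2 V → ℝ) (v : V) : ℝ := ∑ᶠ e ∈ G.incidenceSet v, ℓ e

/-- Characteristic value of an edge (tree case: no tile terms). -/
def cVal (G : SimpleGraph V) (ℓ : Sym2 V → ℝ) (e : Sym2 V) : ℝ :=
  1 / ℓ e - ∑ᶠ w ∈ {w : V | w ∈ e}, 1 / mval G ℓ w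

/-- Boundary vertices of a subgraph. -/
def bdry (G : SimpleGraph V) (H : G.Subgraph) : Set V :=
  {v ∈ H.verts | (H.neighborSet v).ncard < (G.neighborSet v).ncard}

/-- Total (subgraph-)degree of the boundary of a subgraph. -/
def degBdry (G : SimpleGraph V) (H : G.Subgraph) : ℝ :=
  ∑ᶠ v ∈ bdry G H, ((H.neighborSet v).ncard : ℝ)

/-- Isoperimetric constant of a metric graph. -/
def alpha (G : SimpleGraph V) (ℓ : Sym2 V → ℝ) : ℝ :=
  sInf {x | ∃ H : G.Subgraph, H.verts.Finite ∧ H.Connected ∧ H.edgeSet.Nonempty ∧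
    x = degBdry G H / mes ℓ H.edgeSet}

/-- The star-like subgraph generated by a vertex set `U`: its edges are all the
edges of `G` incident to some vertex of `U`. -/
def starSubgraph (G : SimpleGraph V) (U : Set V) : G.Subgraph where
  verts := U ∪ {w | ∃ u ∈ U, G.Adj u w}
  Adj u w := G.Adj u w ∧ (u ∈ U ∨ w ∈ U)
  adj_sub h := h.1
  edge_vert h := h.2.elim (fun h' => Or.inl h') (fun h' => Or.inr ⟨_, h', h.1.symm⟩)
  symm := ⟨fun u w h => ⟨h.1.symm, h.2.symm⟩⟩

lemma finsum_mem_fin {α : Type*} {M : Type*} [AddCommMonoid M] (f : α → M)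
    {s : Set α} (hs : s.Finite) : ∑ᶠ i ∈ s, f i = ∑ i ∈ hs.toFinset, f i := by
  rw [← finsum_mem_coe_finset, hs.coe_toFinset]

section
variable (G : SimpleGraph V) (ℓ : Sym2 V → ℝ)
variable (hlf : ∀ v : V, (G.neighborSet v).Finite)
  (hpos : ∀ e ∈ G.edgeSet, 0 < ℓ e)

include hlf in
lemma incidence_finite (v : V) : (G.incidenceSet v).Finite := by
  have : G.incidenceSet v ⊆ (fun w => s(v, w)) '' (G.neighborSet v) := by
    intro e he
    obtain ⟨hE, hv⟩ := he
    refine ⟨Sym2.Mem.other hv, ?_, Sym2.other_spec hv⟩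
    have : s(v, Sym2.Mem.other hv) ∈ G.edgeSet := by rw [Sym2.other_spec hv]; exact hE
    exact this
  exact ((hlf v).image _).subset this

include hlf hpos in
lemma mval_pos (hdeg : ∀ v : V, 1 ≤ (G.neighborSet v).ncard) (v : V) : 0 < mval G ℓ v := by
  have hfin := incidence_finite G hlf v
  have hne : (G.incidenceSet v).Nonempty := by
    have : (G.neighborSet v).Nonempty := by
      rw [← Set.ncard_pos (hlf v)]; exact lt_of_lt_of_le Nat.one_pos (hdeg v)
    obtain ⟨w, hw⟩ := this
    exact ⟨s(v, w), (G.mk'_mem_incidenceSet_left_iff).2 hw⟩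
  rw [mval, finsum_mem_fin _ hfin]
  apply Finset.sum_pos
  · intro e he
    exact hpos e (G.incidenceSet_subset v (hfin.mem_toFinset.mp he))
  · exact ⟨hne.choose, hfin.mem_toFinset.mpr hne.choose_spec⟩

include hpos in
lemma mes_nonneg {E : Set (Sym2 V)} (hE : E ⊆ G.edgeSet) (hEfin : E.Finite) : 0 ≤ mes ℓ E := by
  rw [mes, finsum_mem_fin _ hEfin]
  exact Finset.sum_nonneg fun e he => (hpos e (hE (hEfin.mem_toFinset.mp he))).le

include hpos in
lemma mes_mono {E F : Set (Sym2 V)} (hEF : E ⊆ F) (hF : F ⊆ G.edgeSet) (hFfin : F.Finite) :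
    mes ℓ E ≤ mes ℓ F := by
  rw [mes, mes, finsum_mem_fin _ hFfin, finsum_mem_fin _ (hFfin.subset hEF)]
  apply Finset.sum_le_sum_of_subset_of_nonneg
  · intro e he; simp only [Set.Finite.mem_toFinset] at *; exact hEF he
  · intro e he _; exact (hpos e (hF (hFfin.mem_toFinset.mp he))).le

include hpos in
lemma mes_union_le {E F : Set (Sym2 V)} (hE : E ⊆ G.edgeSet) (hF : F ⊆ G.edgeSet)
    (hEfin : E.Finite) (hFfin : F.Finite) : mes ℓ (E ∪ F) ≤ mes ℓ E + mes ℓ F := by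
  classical
  rw [mes, mes, mes, finsum_mem_fin _ (hEfin.union hFfin),
    finsum_mem_fin _ hEfin, finsum_mem_fin _ hFfin]
  have h1 : (hEfin.union hFfin).toFinset = hEfin.toFinset ∪ hFfin.toFinset := by
    ext e; simp
  rw [h1]
  have h2 := Finset.sum_union_inter (s₁ := hEfin.toFinset) (s₂ := hFfin.toFinset) (f := ℓ)
  have h3 : 0 ≤ ∑ e ∈ hEfin.toFinset ∩ hFfin.toFinset, ℓ e :=
    Finset.sum_nonneg fun e he => (hpos e (hE (hEfin.mem_toFinset.mp (Finset.mem_of_mem_inter_left he)))).le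
  linarith
end

/-- Edges of `G` meeting a vertex set `U`. -/
def Medges (G : SimpleGraph V) (U : Set V) : Set (Sym2 V) := {e ∈ G.edgeSet | ∃ u ∈ U, u ∈ e}

lemma star_edgeSet (G : SimpleGraph V) (U : Set V) :
    (starSubgraph G U).edgeSet = Medges G U := by
  ext e
  induction e with
  | _ x y =>
    simp only [SimpleGraph.Subgraph.mem_edgeSet, Medges, Set.mem_setOf_eq,
      SimpleGraph.mem_edgeSet, starSubgraph]
    constructor
    · rintro ⟨ha, hx | hy⟩
      · exact ⟨ha, x, hx, by simp⟩
      · exact ⟨ha, y, hy, by simp⟩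
    · rintro ⟨ha, u, hu, hmem⟩
      rcases Sym2.mem_iff.mp hmem with rfl | rfl
      · exact ⟨ha, Or.inl hu⟩
      · exact ⟨ha, Or.inr hu⟩

lemma Medges_finite (G : SimpleGraph V) (hlf : ∀ v : V, (G.neighborSet v).Finite)
    {U : Set V} (hU : U.Finite) : (Medges G U).Finite := by
  have : Medges G U ⊆ ⋃ u ∈ U, G.incidenceSet u := by
    rintro e ⟨he, u, hu, hmem⟩
    exact Set.mem_biUnion hu ⟨he, hmem⟩
  exact ((hU.biUnion fun u _ => incidence_finite G hlf u).subset this)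

lemma Medges_subset (G : SimpleGraph V) (U : Set V) : Medges G U ⊆ G.edgeSet := fun _ h => h.1

/-- A connected subgraph of an acyclic graph is induced. -/
lemma subgraph_induced {G : SimpleGraph V} (hacyc : G.IsAcyclic) (H : G.Subgraph)
    (hc : H.Connected) {u v : V} (hu : u ∈ H.verts) (hv : v ∈ H.verts) (ha : G.Adj u v) :
    H.Adj u v := by
  haveI := Classical.decEq V
  obtain ⟨w⟩ := hc.preconnected ⟨u, hu⟩ ⟨v, hv⟩
  set w' : G.Walk u v := w.map H.hom with hw'
  have hKey : (⟨w'.bypass, SimpleGraph.Walk.bypass_isPath w'⟩ : G.Path u v)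
      = SimpleGraph.Path.singleton ha := SimpleGraph.isAcyclic_iff_path_unique.mp hacyc _ _
  have hmem : s(u, v) ∈ w'.edges := by
    apply SimpleGraph.Walk.edges_bypass_subset w'
    have : w'.bypass = (SimpleGraph.Path.singleton ha : G.Walk u v) := congrArg Subtype.val hKey
    rw [this]
    exact SimpleGraph.Path.mk'_mem_edges_singleton ha
  replace hmem : s(u, v) ∈ w.edges.map (Sym2.map H.hom) := by
    rw [← SimpleGraph.Walk.edges_map]; exact hmem
  rw [List.mem_map] at hmem
  obtain ⟨e0, he0, heq⟩ := hmem
  have he0' : e0 ∈ H.coe.edgeSet := SimpleGraph.Walk.edges_subset_edgeSet w he0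
  induction e0 with
  | _ a b =>
    rw [Sym2.map_pair_eq, Sym2.eq_iff] at heq
    have hadj : H.Adj ↑a ↑b := he0'
    rcases heq with ⟨h1, h2⟩ | ⟨h1, h2⟩
    · rw [← h1, ← h2]; exact hadj
    · rw [← h1, ← h2]; exact hadj.symm

/-- Edge count of a finite induced subtree. -/
lemma tree_count {G : SimpleGraph V} (hacyc : G.IsAcyclic) {C : Set V} (hCfin : C.Finite)
    (hconn : (G.induce C).Connected) :
    {e ∈ G.edgeSet | ∀ x ∈ e, x ∈ C}.ncard + 1 = C.ncard := by
  classical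
  haveI := hCfin.fintype
  haveI : Fintype (G.induce C).edgeSet := Set.Finite.fintype (Set.toFinite _)
  set emb := SimpleGraph.Embedding.induce (G := G) C with hemb
  have hacyc' : (G.induce C).IsAcyclic := by
    intro v c hc
    exact hacyc (c.map emb.toHom) (hc.map emb.injective)
  have htree : (G.induce C).IsTree := ⟨hconn, hacyc'⟩
  have hcard := htree.card_edgeFinset
  have himg : {e ∈ G.edgeSet | ∀ x ∈ e, x ∈ C}
      = Sym2.map (Subtype.val : ↑C → V) '' (G.induce C).edgeSet := by
    ext e
    constructor
    · rintro ⟨he, hC⟩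
      induction e with
      | _ x y =>
        have hx : x ∈ C := hC x (Sym2.mem_mk_left x y)
        have hy : y ∈ C := hC y (Sym2.mem_mk_right x y)
        refine ⟨s(⟨x, hx⟩, ⟨y, hy⟩), ?_, by rw [Sym2.map_pair_eq]⟩
        exact he
    · rintro ⟨e', he', rfl⟩
      induction e' with
      | _ a b =>
        rw [Sym2.map_pair_eq]
        have : G.Adj ↑a ↑b := he'
        exact ⟨this, by
          intro x hx
          rcases Sym2.mem_iff.mp hx with rfl | rfl
          · exact a.2
          · exact b.2⟩
  rw [himg, Set.ncard_image_of_injective _ (Sym2.map.injective Subtype.val_injective)]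
  rw [Set.ncard_eq_toFinset_card']
  rw [show C.ncard = Fintype.card ↑C by
    rw [← Nat.card_coe_set_eq, Nat.card_eq_fintype_card]]
  exact hcard

/-- Edges of `G` leaving `C`. -/
def OutE (G : SimpleGraph V) (C : Set V) : Set (Sym2 V) :=
  {e ∈ G.edgeSet | (∃ x ∈ e, x ∈ C) ∧ (∃ y ∈ e, y ∉ C)}

lemma OutE_subset_Medges (G : SimpleGraph V) (C : Set V) : OutE G C ⊆ Medges G C :=
  fun e he => ⟨he.1, let ⟨x, hx, hxC⟩ := he.2.1; ⟨x, hxC, hx⟩⟩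

section CoreSum
variable {G : SimpleGraph V} {ℓ : Sym2 V → ℝ}
  (hlf : ∀ v : V, (G.neighborSet v).Finite)
  (hpos : ∀ e ∈ G.edgeSet, 0 < ℓ e)
  (hdeg1 : ∀ v : V, 1 ≤ (G.neighborSet v).ncard)

include hlf hpos hdeg1 in
lemma sum_cval_le (hacyc : G.IsAcyclic) {C : Set V} (hCfin : C.Finite) (hCne : C.Nonempty)
    (hconn : (G.induce C).Connected) :
    ∑ᶠ e ∈ Medges G C, cVal G ℓ e * ℓ e ≤ ((OutE G C).ncard : ℝ) := by
  classical
  have hMfin := Medges_finite G hlf hCfin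
  set EF := hMfin.toFinset with hEF
  set CF := hCfin.toFinset with hCF
  set m : V → ℝ := mval G ℓ with hm
  have hmpos : ∀ v, 0 < m v := fun v => mval_pos G ℓ hlf hpos hdeg1 v
  set F : Sym2 V → V → ℝ := fun e w => if w ∈ e then ℓ e / m w else 0 with hF
  have hFnonneg : ∀ e ∈ EF, ∀ w, 0 ≤ F e w := by
    intro e he w
    simp only [hF]
    split
    · exact div_nonneg (hpos e (Medges_subset G C (hMfin.mem_toFinset.mp he))).le (hmpos w).le
    · exact le_refl 0
  -- Step: pointwise bound
  have hpt : ∀ e ∈ EF, cVal G ℓ e * ℓ e ≤ 1 - ∑ w ∈ CF, F e w := by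
    intro e he
    have heG : e ∈ G.edgeSet := Medges_subset G C (hMfin.mem_toFinset.mp he)
    induction e with
    | _ x y =>
      have hadj : G.Adj x y := heG
      have hxy : x ≠ y := hadj.ne
      have hℓpos : 0 < ℓ s(x, y) := hpos _ heG
      have hset : {w : V | w ∈ s(x, y)} = ({x, y} : Set V) := by
        ext w; simp [Sym2.mem_iff]
      have hcv : cVal G ℓ s(x, y) * ℓ s(x, y)
          = 1 - (ℓ s(x, y) / m x + ℓ s(x, y) / m y) := by
        rw [cVal, hset, finsum_mem_pair hxy]
        field_simp
        ring
      rw [hcv]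
      have hsum : ∑ w ∈ CF, F s(x, y) w ≤ ℓ s(x, y) / m x + ℓ s(x, y) / m y := by
        have h1 : ∑ w ∈ CF, F s(x, y) w = ∑ w ∈ CF ∩ {x, y}, F s(x, y) w := by
          refine (Finset.sum_subset (Finset.inter_subset_left) ?_).symm
          intro w hw hw'
          have : w ∉ ({x, y} : Finset V) := fun hmem => hw' (Finset.mem_inter.mpr ⟨hw, hmem⟩)
          have hwe : ¬ (w ∈ s(x, y)) := by
            rw [Sym2.mem_iff]
            simpa using this
          simp [hF, hwe]
        rw [h1]
        have h2 : ∑ w ∈ CF ∩ {x, y}, F s(x, y) w ≤ ∑ w ∈ ({x, y} : Finset V), F s(x, y) w := by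
          apply Finset.sum_le_sum_of_subset_of_nonneg (Finset.inter_subset_right)
          intro w _ _; exact hFnonneg _ he w
        refine h2.trans ?_
        rw [Finset.sum_pair hxy]
        have hfx : F s(x, y) x = ℓ s(x, y) / m x := by simp [hF]
        have hfy : F s(x, y) y = ℓ s(x, y) / m y := by simp [hF]
        rw [hfx, hfy]
      linarith
  -- Step: sum the pointwise bound and swap
  have htot : ∑ e ∈ EF, cVal G ℓ e * ℓ e ≤ (EF.card : ℝ) - ∑ w ∈ CF, ∑ e ∈ EF, F e w := by
    calc ∑ e ∈ EF, cVal G ℓ e * ℓ e ≤ ∑ e ∈ EF, (1 - ∑ w ∈ CF, F e w) :=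
          Finset.sum_le_sum hpt
      _ = (EF.card : ℝ) - ∑ e ∈ EF, ∑ w ∈ CF, F e w := by
          rw [Finset.sum_sub_distrib]; simp
      _ = (EF.card : ℝ) - ∑ w ∈ CF, ∑ e ∈ EF, F e w := by rw [Finset.sum_comm]
  -- Step: inner sums are 1
  have hinner : ∀ w ∈ CF, ∑ e ∈ EF, F e w = 1 := by
    intro w hw
    have hwC : w ∈ C := hCfin.mem_toFinset.mp hw
    have hIfin := incidence_finite G hlf w
    have hfilter : EF.filter (fun e => w ∈ e) = hIfin.toFinset := by
      ext e
      simp only [Finset.mem_filter, Set.Finite.mem_toFinset, hEF]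
      constructor
      · rintro ⟨heM, hwe⟩
        exact ⟨Medges_subset G C heM, hwe⟩
      · rintro ⟨heG, hwe⟩
        exact ⟨⟨heG, w, hwC, hwe⟩, hwe⟩
    have h1 : ∑ e ∈ EF, F e w = ∑ e ∈ EF.filter (fun e => w ∈ e), ℓ e / m w := by
      rw [Finset.sum_filter]
    rw [h1, hfilter, ← Finset.sum_div]
    have : ∑ e ∈ hIfin.toFinset, ℓ e = m w := by
      rw [hm, mval, finsum_mem_fin _ hIfin]
    rw [this, div_self (hmpos w).ne']
  have htot2 : ∑ e ∈ EF, cVal G ℓ e * ℓ e ≤ (EF.card : ℝ) - (CF.card : ℝ) := by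
    have : ∑ w ∈ CF, ∑ e ∈ EF, F e w = (CF.card : ℝ) := by
      rw [Finset.sum_congr rfl hinner]; simp
    linarith [htot, this.ge]
  -- Step: edge counting
  have hpart : (Medges G C).ncard = {e ∈ G.edgeSet | ∀ x ∈ e, x ∈ C}.ncard + (OutE G C).ncard := by
    have hun : Medges G C = {e ∈ G.edgeSet | ∀ x ∈ e, x ∈ C} ∪ OutE G C := by
      ext e
      constructor
      · rintro ⟨heG, u, huC, hue⟩
        by_cases hall : ∀ x ∈ e, x ∈ C
        · exact Or.inl ⟨heG, hall⟩
        · push_neg at hall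
          obtain ⟨y, hy, hyC⟩ := hall
          exact Or.inr ⟨heG, ⟨u, hue, huC⟩, ⟨y, hy, hyC⟩⟩
      · rintro (⟨heG, hall⟩ | ⟨heG, ⟨x, hxe, hxC⟩, _⟩)
        · induction e with
          | _ x y => exact ⟨heG, x, hall x (Sym2.mem_mk_left x y), Sym2.mem_mk_left x y⟩
        · exact ⟨heG, x, hxC, hxe⟩
    rw [hun]
    apply Set.ncard_union_eq
    · rw [Set.disjoint_left]
      rintro e ⟨_, hall⟩ ⟨_, _, y, hy, hyC⟩
      exact hyC (hall y hy)
    · exact hMfin.subset (by rw [hun]; exact Set.subset_union_left)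
    · exact hMfin.subset (by rw [hun]; exact Set.subset_union_right)
  have hInE := tree_count hacyc hCfin hconn
  -- conclude
  rw [finsum_mem_fin _ hMfin]
  have hEFcard : EF.card = (Medges G C).ncard := by
    rw [Set.ncard_eq_toFinset_card _ hMfin]
  have hCFcard : CF.card = C.ncard := by
    rw [Set.ncard_eq_toFinset_card _ hCfin]
  refine htot2.trans ?_
  rw [hEFcard, hCFcard, hpart, ← hInE]
  push_cast
  linarith
end CoreSum

section Key
variable {G : SimpleGraph V} {ℓ : Sym2 V → ℝ}
  (hlf : ∀ v : V, (G.neighborSet v).Finite)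
  (hpos : ∀ e ∈ G.edgeSet, 0 < ℓ e)
  (hdeg1 : ∀ v : V, 1 ≤ (G.neighborSet v).ncard)

include hlf hpos hdeg1 in
lemma key_estimate [Infinite V] (hgconn : G.Connected) (hacyc : G.IsAcyclic)
    {ε M₀ c₀ : ℝ} (hc₀ε : c₀ ≤ ε) (hc₀M : c₀ * M₀ ≤ 1) (hc₀ : 0 < c₀)
    {C : Set V} (hCfin : C.Finite) (hCne : C.Nonempty) (hCconn : (G.induce C).Connected)
    (havC : M₀ ≤ mes ℓ (Medges G C) →
      ε * mes ℓ (Medges G C) ≤ ∑ᶠ e ∈ Medges G C, cVal G ℓ e * ℓ e) :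
    c₀ * mes ℓ (Medges G C) ≤ ((OutE G C).ncard : ℝ) := by
  have hMfin := Medges_finite G hlf hCfin
  have hmes0 : 0 ≤ mes ℓ (Medges G C) := mes_nonneg G ℓ hpos (Medges_subset G C) hMfin
  by_cases hM : M₀ ≤ mes ℓ (Medges G C)
  · calc c₀ * mes ℓ (Medges G C) ≤ ε * mes ℓ (Medges G C) :=
          mul_le_mul_of_nonneg_right hc₀ε hmes0
      _ ≤ ∑ᶠ e ∈ Medges G C, cVal G ℓ e * ℓ e := havC hM
      _ ≤ ((OutE G C).ncard : ℝ) := sum_cval_le hlf hpos hdeg1 hacyc hCfin hCne hCconn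
  · push_neg at hM
    have hone : 1 ≤ ((OutE G C).ncard : ℝ) := by
      have hne : (OutE G C).Nonempty := by
        by_contra hempty
        rw [Set.not_nonempty_iff_eq_empty] at hempty
        have hclosed : ∀ x ∈ C, ∀ y, G.Adj x y → y ∈ C := by
          intro x hx y hxy
          by_contra hyC
          have : s(x, y) ∈ OutE G C := by
            refine ⟨hxy, ⟨x, ?_, hx⟩, ⟨y, ?_, hyC⟩⟩ <;> simp [Sym2.mem_iff]
          rw [hempty] at this
          exact this
        have hall : ∀ v : V, v ∈ C := by
          obtain ⟨x₀, hx₀⟩ := hCne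
          intro v
          obtain ⟨p⟩ := hgconn.preconnected x₀ v
          clear hM hmes0
          induction p with
          | nil => exact hx₀
          | cons h p ih => exact ih (hclosed _ hx₀ _ h) -- may be wrong shape
        have : C = Set.univ := Set.eq_univ_of_forall hall
        rw [this] at hCfin
        exact Set.infinite_univ hCfin
      have hOfin : (OutE G C).Finite := hMfin.subset (OutE_subset_Medges G C)
      have : 0 < (OutE G C).ncard := (Set.ncard_pos hOfin).mpr hne
      exact_mod_cast this
    calc c₀ * mes ℓ (Medges G C) ≤ c₀ * M₀ := mul_le_mul_of_nonneg_left hM.le hc₀.le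
      _ ≤ 1 := hc₀M
      _ ≤ _ := hone
end Key

/-- Connected component of `x` within the induced graph on `I`, as a set of vertices. -/
def Icomp (G : SimpleGraph V) (I : Set V) (x : V) : Set V :=
  {y | ∃ hy : y ∈ I, ∃ hx : x ∈ I, (G.induce I).Reachable ⟨x, hx⟩ ⟨y, hy⟩}

variable {G : SimpleGraph V}

lemma Icomp_subset (I : Set V) (x : V) : Icomp G I x ⊆ I := fun _ h => h.1

lemma Icomp_self {I : Set V} {x : V} (hx : x ∈ I) : x ∈ Icomp G I x :=
  ⟨hx, hx, SimpleGraph.Reachable.refl _⟩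

lemma Icomp_eq {I : Set V} {x y : V} (hy : y ∈ Icomp G I x) : Icomp G I y = Icomp G I x := by
  obtain ⟨hyI, hxI, hr⟩ := hy
  ext z
  constructor
  · rintro ⟨hzI, _, hr2⟩
    exact ⟨hzI, hxI, hr.trans hr2⟩
  · rintro ⟨hzI, _, hr2⟩
    exact ⟨hzI, hyI, hr.symm.trans hr2⟩

lemma Icomp_adj {I : Set V} {x y z : V} (hy : y ∈ Icomp G I x) (hz : z ∈ I)
    (hadj : G.Adj y z) : z ∈ Icomp G I x := by
  obtain ⟨hyI, hxI, hr⟩ := hy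
  refine ⟨hz, hxI, hr.trans (SimpleGraph.Adj.reachable ?_)⟩
  exact hadj

lemma Icomp_walk_reach {I : Set V} {x : V} :
    ∀ {a b : ↑I} (p : (G.induce I).Walk a b) (ha : ↑a ∈ Icomp G I x),
      ∃ hb : ↑b ∈ Icomp G I x,
        (G.induce (Icomp G I x)).Reachable ⟨↑a, ha⟩ ⟨↑b, hb⟩ := by
  intro a b p
  induction p with
  | nil => exact fun ha => ⟨ha, SimpleGraph.Reachable.refl _⟩
  | @cons a c b h q ih =>
    intro ha
    have hadj : G.Adj ↑a ↑c := h
    have hc : ↑c ∈ Icomp G I x := Icomp_adj ha c.2 hadj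
    obtain ⟨hb, hr⟩ := ih hc
    refine ⟨hb, SimpleGraph.Reachable.trans (SimpleGraph.Adj.reachable ?_) hr⟩
    exact hadj

lemma Icomp_connected {I : Set V} {x : V} (hx : x ∈ I) :
    (G.induce (Icomp G I x)).Connected := by
  rw [SimpleGraph.connected_iff]
  constructor
  · intro a b
    obtain ⟨haI, _, hra⟩ := a.2
    obtain ⟨hbI, _, hrb⟩ := b.2
    obtain ⟨pa⟩ := hra
    obtain ⟨pb⟩ := hrb
    obtain ⟨ha', ra⟩ := Icomp_walk_reach pa (Icomp_self hx)
    obtain ⟨hb', rb⟩ := Icomp_walk_reach pb (Icomp_self hx)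
    have h1 : a = ⟨↑(⟨x, hx⟩ : ↑I), Icomp_self hx⟩ ∨ True := Or.inr trivial
    have : (⟨↑a, ha'⟩ : ↑(Icomp G I x)) = a := Subtype.ext rfl
    rw [this] at ra
    have : (⟨↑b, hb'⟩ : ↑(Icomp G I x)) = b := Subtype.ext rfl
    rw [this] at rb
    exact ra.symm.trans rb
  · exact ⟨⟨x, Icomp_self hx⟩⟩

/-- Interior-to-boundary edges. -/
def EIB (G : SimpleGraph V) (I W : Set V) : Set (Sym2 V) :=
  {e ∈ G.edgeSet | (∃ x ∈ e, x ∈ I) ∧ (∃ y ∈ e, y ∈ W \ I)}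

section Decomp
variable {ℓ : Sym2 V → ℝ}
  (hlf : ∀ v : V, (G.neighborSet v).Finite)
  (hpos : ∀ e ∈ G.edgeSet, 0 < ℓ e)
  (hdeg1 : ∀ v : V, 1 ≤ (G.neighborSet v).ncard)

include hlf hpos hdeg1 in
lemma decomp [Infinite V] (hgconn : G.Connected) (hacyc : G.IsAcyclic)
    {ε M₀ c₀ : ℝ} (hc₀ε : c₀ ≤ ε) (hc₀M : c₀ * M₀ ≤ 1) (hc₀ : 0 < c₀)
    {W I : Set V} (hWfin : W.Finite) (hIW : I ⊆ W)
    (hint : ∀ x ∈ I, ∀ y, G.Adj x y → y ∈ W)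
    (hav' : ∀ C : Set V, C ⊆ I → C.Nonempty → (G.induce C).Connected →
      (M₀ ≤ mes ℓ (Medges G C) →
        ε * mes ℓ (Medges G C) ≤ ∑ᶠ e ∈ Medges G C, cVal G ℓ e * ℓ e)) :
    ∀ n : ℕ, ∀ J : Set V, J ⊆ I → (∀ x ∈ J, Icomp G I x ⊆ J) → J.ncard = n →
      c₀ * mes ℓ (Medges G J) ≤ ((EIB G I W ∩ Medges G J).ncard : ℝ) := by
  have hIfin : I.Finite := hWfin.subset hIW
  intro n
  induction n using Nat.strong_induction_on with
  | _ n ih =>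
    intro J hJI hJclosed hJn
    have hJfin : J.Finite := hIfin.subset hJI
    rcases J.eq_empty_or_nonempty with rfl | ⟨x₀, hx₀⟩
    · have : Medges G (∅ : Set V) = ∅ := by
        ext e; simp [Medges]
      rw [this]
      have : mes ℓ (∅ : Set (Sym2 V)) = 0 := by
        rw [mes, finsum_mem_empty]
      rw [this, mul_zero]
      positivity
    · set C := Icomp G I x₀ with hC
      have hx₀I : x₀ ∈ I := hJI hx₀
      have hCJ : C ⊆ J := hJclosed x₀ hx₀
      have hCI : C ⊆ I := Icomp_subset I x₀
      have hCfin : C.Finite := hIfin.subset hCI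
      have hCne : C.Nonempty := ⟨x₀, Icomp_self hx₀I⟩
      have hCconn := Icomp_connected (G := G) hx₀I
      set J' := J \ C with hJ'
      have hJ'I : J' ⊆ I := fun x hx => hJI hx.1
      have hJ'closed : ∀ x ∈ J', Icomp G I x ⊆ J' := by
        rintro x ⟨hxJ, hxC⟩ y hy
        refine ⟨hJclosed x hxJ hy, fun hyC => hxC ?_⟩
        have h1 : Icomp G I y = Icomp G I x := Icomp_eq hy
        have h2 : Icomp G I y = Icomp G I x₀ := Icomp_eq hyC
        have h3 : Icomp G I x₀ = Icomp G I x := by rw [← h2, h1]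
        rw [hC, h3]
        exact Icomp_self (hJI hxJ)
      have hJ'lt : J'.ncard < n := by
        rw [← hJn]
        apply Set.ncard_lt_ncard _ hJfin
        exact ⟨Set.diff_subset, fun hsub => (hsub (hCJ (Icomp_self hx₀I))).2 (Icomp_self hx₀I)⟩
      have hIH := ih J'.ncard hJ'lt J' hJ'I hJ'closed rfl
      -- key estimate on C
      have hkey := key_estimate hlf hpos hdeg1 hgconn hacyc hc₀ε hc₀M hc₀ hCfin hCne hCconn
        (hav' C hCI hCne hCconn)
      -- union decomposition of edge sets
      have hMsplit : Medges G J = Medges G C ∪ Medges G J' := by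
        ext e
        constructor
        · rintro ⟨he, u, hu, hue⟩
          by_cases huC : u ∈ C
          · exact Or.inl ⟨he, u, huC, hue⟩
          · exact Or.inr ⟨he, u, ⟨hu, huC⟩, hue⟩
        · rintro (⟨he, u, hu, hue⟩ | ⟨he, u, hu, hue⟩)
          · exact ⟨he, u, hCJ hu, hue⟩
          · exact ⟨he, u, hu.1, hue⟩
      have hmes_le : mes ℓ (Medges G J) ≤ mes ℓ (Medges G C) + mes ℓ (Medges G J') := by
        rw [hMsplit]
        exact mes_union_le G ℓ hpos (Medges_subset G C) (Medges_subset G J')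
          (Medges_finite G hlf hCfin) (Medges_finite G hlf (hIfin.subset hJ'I))
      -- OutE C ⊆ EIB ∩ Medges C
      have hOut_sub : OutE G C ⊆ EIB G I W ∩ Medges G C := by
        rintro e ⟨he, ⟨x, hxe, hxC⟩, ⟨y, hye, hyC⟩⟩
        have hxy : x ≠ y := fun h => hyC (h ▸ hxC)
        have hexy : e = s(x, y) := ((Sym2.mem_and_mem_iff hxy).mp ⟨hxe, hye⟩)
        have hadj : G.Adj x y := by rw [hexy] at he; exact he
        have hyW : y ∈ W := hint x (hCI hxC) y hadj
        have hyI : y ∉ I := by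
          intro hyI
          exact hyC (Icomp_adj hxC hyI hadj)
        exact ⟨⟨he, ⟨x, hxe, hCI hxC⟩, ⟨y, hye, hyW, hyI⟩⟩, ⟨he, x, hxC, hxe⟩⟩
      -- disjointness and cardinalities
      have hdisj : Disjoint (EIB G I W ∩ Medges G C) (EIB G I W ∩ Medges G J') := by
        rw [Set.disjoint_left]
        rintro e ⟨⟨he, _, ⟨y, hye, hyW, hyI⟩⟩, ⟨_, u, huC, hue⟩⟩ ⟨_, ⟨_, u', hu'J', hu'e⟩⟩
        have huu' : u ≠ u' := fun h => hu'J'.2 (h ▸ huC)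
        have hexy : e = s(u, u') := (Sym2.mem_and_mem_iff huu').mp ⟨hue, hu'e⟩
        rcases Sym2.mem_iff.mp (hexy ▸ hye) with rfl | rfl
        · exact hyI (hCI huC)
        · exact hyI (hJ'I hu'J')
      have hfinC : (EIB G I W ∩ Medges G C).Finite :=
        (Medges_finite G hlf hCfin).subset Set.inter_subset_right
      have hfinJ' : (EIB G I W ∩ Medges G J').Finite :=
        (Medges_finite G hlf (hIfin.subset hJ'I)).subset Set.inter_subset_right
      have hcard : (EIB G I W ∩ Medges G C).ncard + (EIB G I W ∩ Medges G J').ncard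
          ≤ (EIB G I W ∩ Medges G J).ncard := by
        rw [← Set.ncard_union_eq hdisj hfinC hfinJ']
        apply Set.ncard_le_ncard _ ((Medges_finite G hlf hJfin).subset Set.inter_subset_right)
        rintro e (⟨h1, h2⟩ | ⟨h1, h2⟩)
        · exact ⟨h1, hMsplit ▸ Set.mem_union_left _ h2⟩
        · exact ⟨h1, hMsplit ▸ Set.mem_union_right _ h2⟩
      have hcardC : ((OutE G C).ncard : ℝ) ≤ ((EIB G I W ∩ Medges G C).ncard : ℝ) := by
        exact_mod_cast Set.ncard_le_ncard hOut_sub hfinC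
      calc c₀ * mes ℓ (Medges G J) ≤ c₀ * (mes ℓ (Medges G C) + mes ℓ (Medges G J')) :=
            mul_le_mul_of_nonneg_left hmes_le hc₀.le
        _ = c₀ * mes ℓ (Medges G C) + c₀ * mes ℓ (Medges G J') := by ring
        _ ≤ ((EIB G I W ∩ Medges G C).ncard : ℝ) + ((EIB G I W ∩ Medges G J').ncard : ℝ) := by
            have := hkey.trans hcardC
            linarith [hIH]
        _ ≤ ((EIB G I W ∩ Medges G J).ncard : ℝ) := by exact_mod_cast hcard
end Decomp

section MainBound
variable {ℓ : Sym2 V → ℝ}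
  (hlf : ∀ v : V, (G.neighborSet v).Finite)
  (hpos : ∀ e ∈ G.edgeSet, 0 < ℓ e)
  (hdeg1 : ∀ v : V, 1 ≤ (G.neighborSet v).ncard)

include hlf hpos hdeg1 in
lemma main_bound [Infinite V] (hgconn : G.Connected) (hacyc : G.IsAcyclic)
    {ε M₀ c₀ K : ℝ} (hc₀ε : c₀ ≤ ε) (hc₀M : c₀ * M₀ ≤ 1) (hc₀ : 0 < c₀)
    (hK : ∀ e ∈ G.edgeSet, ℓ e ≤ K) (hKpos : 0 < K)
    (hav2 : ∀ C : Set V, C.Finite → C.Nonempty → (G.induce C).Connected →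
      M₀ ≤ mes ℓ (Medges G C) → ε * mes ℓ (Medges G C) ≤ ∑ᶠ e ∈ Medges G C, cVal G ℓ e * ℓ e)
    (H : G.Subgraph) (hHfin : H.verts.Finite) (hHconn : H.Connected) :
    mes ℓ H.edgeSet ≤ (1 / c₀ + K) * degBdry G H := by
  classical
  set W := H.verts with hW
  set I := {v ∈ W | ∀ y, G.Adj v y → y ∈ W} with hI
  set B := W \ I with hB
  have hIW : I ⊆ W := fun v hv => hv.1
  have hBW : B ⊆ W := fun v hv => hv.1
  have hint : ∀ x ∈ I, ∀ y, G.Adj x y → y ∈ W := fun x hx y hxy => hx.2 y hxy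
  have hIfin : I.Finite := hHfin.subset hIW
  have hBfin : B.Finite := hHfin.subset hBW
  -- induced
  have hind : ∀ u v : V, u ∈ W → v ∈ W → G.Adj u v → H.Adj u v :=
    fun u v hu hv ha => subgraph_induced hacyc H hHconn hu hv ha
  set EW : Set (Sym2 V) := {e ∈ G.edgeSet | ∀ x ∈ e, x ∈ W} with hEW
  set EBB : Set (Sym2 V) := {e ∈ G.edgeSet | ∀ x ∈ e, x ∈ B} with hEBB
  have hEH : H.edgeSet ⊆ EW := by
    intro e he
    induction e with
    | _ x y =>
      rw [SimpleGraph.Subgraph.mem_edgeSet] at he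
      refine ⟨he.adj_sub, ?_⟩
      intro z hz
      rcases Sym2.mem_iff.mp hz with rfl | rfl
      · exact he.fst_mem
      · exact he.snd_mem
  have hEWfin : EW.Finite := by
    apply (Medges_finite G hlf hHfin).subset
    rintro e ⟨he, hall⟩
    induction e with
    | _ x y => exact ⟨he, x, hall x (Sym2.mem_mk_left x y), Sym2.mem_mk_left x y⟩
  have hEWsub : EW ⊆ Medges G I ∪ EBB := by
    rintro e ⟨he, hall⟩
    induction e with
    | _ x y =>
      by_cases hx : x ∈ I
      · exact Or.inl ⟨he, x, hx, Sym2.mem_mk_left x y⟩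
      · by_cases hy : y ∈ I
        · exact Or.inl ⟨he, y, hy, Sym2.mem_mk_right x y⟩
        · refine Or.inr ⟨he, ?_⟩
          intro z hz
          rcases Sym2.mem_iff.mp hz with rfl | rfl
          · exact ⟨hall z (Sym2.mem_mk_left z y), hx⟩
          · exact ⟨hall z (Sym2.mem_mk_right x z), hy⟩
  have hMIfin : (Medges G I).Finite := Medges_finite G hlf hIfin
  have hEBBfin : EBB.Finite := hEWfin.subset (by
    rintro e ⟨he, hall⟩
    exact ⟨he, fun x hx => (hall x hx).1⟩)
  -- mes chain
  have hmes1 : mes ℓ H.edgeSet ≤ mes ℓ (Medges G I) + mes ℓ EBB := by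
    calc mes ℓ H.edgeSet ≤ mes ℓ (Medges G I ∪ EBB) := by
          apply mes_mono G ℓ hpos (hEH.trans hEWsub)
          · rintro e (he | he)
            · exact Medges_subset G I he
            · exact he.1
          · exact hMIfin.union hEBBfin
      _ ≤ mes ℓ (Medges G I) + mes ℓ EBB :=
          mes_union_le G ℓ hpos (Medges_subset G I) (fun e he => he.1) hMIfin hEBBfin
  -- decomposition bound
  have hdec := decomp hlf hpos hdeg1 hgconn hacyc hc₀ε hc₀M hc₀ hHfin hIW hint
    (fun C hCI hCne hCconn hM => hav2 C (hIfin.subset hCI) hCne hCconn hM)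
    I.ncard I (subset_refl I) (fun x _ => Icomp_subset I x) rfl
  have hEIBfin : (EIB G I W).Finite := hMIfin.subset (by
    rintro e ⟨he, ⟨x, hxe, hxI⟩, _⟩
    exact ⟨he, x, hxI, hxe⟩)
  have hdec2 : c₀ * mes ℓ (Medges G I) ≤ ((EIB G I W).ncard : ℝ) := by
    refine hdec.trans ?_
    exact_mod_cast Set.ncard_le_ncard Set.inter_subset_left hEIBfin
  -- EBB bound
  have hEBB : mes ℓ EBB ≤ K * (EBB.ncard : ℝ) := by
    rw [mes, finsum_mem_fin _ hEBBfin, Set.ncard_eq_toFinset_card _ hEBBfin]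
    calc ∑ e ∈ hEBBfin.toFinset, ℓ e ≤ ∑ _e ∈ hEBBfin.toFinset, K := by
          apply Finset.sum_le_sum
          intro e he
          exact hK e (hEBBfin.mem_toFinset.mp he).1
      _ = K * (hEBBfin.toFinset.card : ℝ) := by rw [Finset.sum_const, nsmul_eq_mul, mul_comm]
  -- counting: #EIB + #EBB ≤ degBdry
  set NF : V → Finset V := fun b => ((hlf b).subset (H.neighborSet_subset b)).toFinset with hNF
  set BF := hBfin.toFinset with hBF
  have hcount : ((EIB G I W).ncard : ℝ) + (EBB.ncard : ℝ) ≤ degBdry G H := by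
    have hdisj : Disjoint (EIB G I W) EBB := by
      rw [Set.disjoint_left]
      rintro e ⟨_, ⟨x, hxe, hxI⟩, _⟩ ⟨_, hall⟩
      exact (hall x hxe).2 hxI
    have hEIBEBBfin : (EIB G I W ∪ EBB).Finite := hEIBfin.union hEBBfin
    have hsub : hEIBEBBfin.toFinset ⊆ BF.biUnion (fun b => (NF b).image (fun w => s(b, w))) := by
      intro e he
      rw [Set.Finite.mem_toFinset] at he
      have hbe : ∃ b ∈ e, b ∈ B := by
        rcases he with ⟨_, _, hy⟩ | ⟨heG, hall⟩
        · exact (let ⟨y, hy1, hy2⟩ := hy; ⟨y, hy1, hy2⟩)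
        · induction e with
          | _ x y => exact ⟨x, Sym2.mem_mk_left x y, hall x (Sym2.mem_mk_left x y)⟩
      obtain ⟨b, hbe, hbB⟩ := hbe
      have heG : e ∈ G.edgeSet := by
        rcases he with ⟨h, _⟩ | ⟨h, _⟩ <;> exact h
      have hallW : ∀ x ∈ e, x ∈ W := by
        intro x hx
        rcases he with ⟨_, ⟨z, hze, hzI⟩, _⟩ | ⟨_, hall⟩
        · -- e = s(z, y'), endpoints z ∈ I and the rest: use adjacency
          have hzb : z ≠ b := fun h => hbB.2 (h ▸ hzI)
          have hezb : e = s(z, b) := (Sym2.mem_and_mem_iff hzb).mp ⟨hze, hbe⟩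
          rcases Sym2.mem_iff.mp (hezb ▸ hx) with rfl | rfl
          · exact hIW hzI
          · exact hbB.1
        · exact (hall x hx).1
      -- other endpoint
      have hw := Sym2.other_spec hbe
      set w := Sym2.Mem.other hbe with hw'
      have hwW : w ∈ W := hallW w (by rw [← hw]; exact Sym2.mem_mk_right b w)
      have hadj : G.Adj b w := by rw [← hw] at heG; exact heG
      have hHadj : H.Adj b w := hind b w (hbB.1) hwW hadj
      apply Finset.mem_biUnion.mpr
      refine ⟨b, hBfin.mem_toFinset.mpr hbB, ?_⟩
      apply Finset.mem_image.mpr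
      exact ⟨w, Set.Finite.mem_toFinset _ |>.mpr hHadj, hw⟩
    have hcard1 : (EIB G I W).ncard + EBB.ncard = hEIBEBBfin.toFinset.card := by
      rw [← Set.ncard_union_eq hdisj hEIBfin hEBBfin, Set.ncard_eq_toFinset_card _ hEIBEBBfin]
    have hcard2 : hEIBEBBfin.toFinset.card ≤ ∑ b ∈ BF, (H.neighborSet b).ncard := by
      calc hEIBEBBfin.toFinset.card
          ≤ (BF.biUnion (fun b => (NF b).image (fun w => s(b, w)))).card :=
            Finset.card_le_card hsub
        _ ≤ ∑ b ∈ BF, ((NF b).image (fun w => s(b, w))).card := Finset.card_biUnion_le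
        _ ≤ ∑ b ∈ BF, (H.neighborSet b).ncard := by
            apply Finset.sum_le_sum
            intro b _
            calc ((NF b).image (fun w => s(b, w))).card ≤ (NF b).card := Finset.card_image_le
              _ = (H.neighborSet b).ncard :=
                  (Set.ncard_eq_toFinset_card _ ((hlf b).subset (H.neighborSet_subset b))).symm
    -- B ⊆ bdry
    have hBbdry : B ⊆ bdry G H := by
      rintro b ⟨hbW, hbI⟩
      refine ⟨hbW, ?_⟩
      apply Set.ncard_lt_ncard _ (hlf b)
      constructor
      · exact H.neighborSet_subset b
      · intro hsub'
        apply hbI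
        refine ⟨hbW, fun y hy => ?_⟩
        exact (hsub' hy).snd_mem
    have hbdryfin : (bdry G H).Finite := hHfin.subset (fun v hv => hv.1)
    have hdeg : degBdry G H = ∑ v ∈ hbdryfin.toFinset, ((H.neighborSet v).ncard : ℝ) := by
      rw [degBdry, finsum_mem_fin _ hbdryfin]
    have hsum2 : ∑ b ∈ BF, ((H.neighborSet b).ncard : ℝ) ≤ degBdry G H := by
      rw [hdeg]
      apply Finset.sum_le_sum_of_subset_of_nonneg
      · intro b hb
        exact (Set.Finite.mem_toFinset _).mpr (hBbdry (hBfin.mem_toFinset.mp hb))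
      · intro b _ _
        positivity
    calc ((EIB G I W).ncard : ℝ) + (EBB.ncard : ℝ)
        = (hEIBEBBfin.toFinset.card : ℝ) := by exact_mod_cast hcard1
      _ ≤ (∑ b ∈ BF, (H.neighborSet b).ncard : ℕ) := by exact_mod_cast hcard2
      _ = ∑ b ∈ BF, ((H.neighborSet b).ncard : ℝ) := by push_cast; rfl
      _ ≤ degBdry G H := hsum2
  -- conclude
  have hmesI : mes ℓ (Medges G I) ≤ (1 / c₀) * ((EIB G I W).ncard : ℝ) := by
    rw [div_mul_eq_mul_div, le_div_iff₀ hc₀]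
    calc mes ℓ (Medges G I) * c₀ = c₀ * mes ℓ (Medges G I) := by ring
      _ ≤ ((EIB G I W).ncard : ℝ) := hdec2
      _ = 1 * ((EIB G I W).ncard : ℝ) := by ring
  have hEIB0 : (0 : ℝ) ≤ ((EIB G I W).ncard : ℝ) := by positivity
  have hEBB0 : (0 : ℝ) ≤ (EBB.ncard : ℝ) := by positivity
  have hc₀inv : 0 < 1 / c₀ := by positivity
  calc mes ℓ H.edgeSet ≤ mes ℓ (Medges G I) + mes ℓ EBB := hmes1
    _ ≤ (1 / c₀) * ((EIB G I W).ncard : ℝ) + K * (EBB.ncard : ℝ) := add_le_add hmesI hEBB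
    _ ≤ (1 / c₀ + K) * (((EIB G I W).ncard : ℝ) + (EBB.ncard : ℝ)) := by nlinarith
    _ ≤ (1 / c₀ + K) * degBdry G H := by
        apply mul_le_mul_of_nonneg_left hcount
        positivity
end MainBound

lemma subgraph_edgeSet_sub (H : G.Subgraph) : H.edgeSet ⊆ Medges G H.verts := by
  intro e he
  induction e with
  | _ x y =>
    rw [SimpleGraph.Subgraph.mem_edgeSet] at he
    exact ⟨he.adj_sub, x, he.fst_mem, Sym2.mem_mk_left x y⟩

lemma mes_pos {ℓ : Sym2 V → ℝ} (hpos : ∀ e ∈ G.edgeSet, 0 < ℓ e) {E : Set (Sym2 V)}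
    (hE : E ⊆ G.edgeSet) (hEfin : E.Finite) (hEne : E.Nonempty) : 0 < mes ℓ E := by
  rw [mes, finsum_mem_fin _ hEfin]
  apply Finset.sum_pos
  · intro e he
    exact hpos e (hE (hEfin.mem_toFinset.mp he))
  · exact ⟨hEne.choose, hEfin.mem_toFinset.mpr hEne.choose_spec⟩


/-- Theorem 3.1 for trees: if the averaged characteristic value over all
large star-like subgraphs is bounded below by `ε > 0`, then `α(G) > 0`. -/
theorem statement_14 {V : Type*} [Infinite V] (G : SimpleGraph V)
    (hconn : G.Connected) (hacyc : G.IsAcyclic)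
    (hlf : ∀ v : V, (G.neighborSet v).Finite)
    (hdeg : ∀ v : V, 2 ≤ (G.neighborSet v).ncard)
    (ℓ : Sym2 V → ℝ) (hpos : ∀ e ∈ G.edgeSet, 0 < ℓ e)
    (hbdd : BddAbove (ℓ '' G.edgeSet))
    (ε M₀ : ℝ) (hε : 0 < ε) (hM₀ : 0 < M₀)
    (hav : ∀ U : Set V, U.Finite → U.Nonempty → (G.induce U).Connected →
      M₀ ≤ mes ℓ (starSubgraph G U).edgeSet →
      ε * mes ℓ (starSubgraph G U).edgeSet
        ≤ ∑ᶠ e ∈ (starSubgraph G U).edgeSet, cVal G ℓ e * ℓ e) :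
    0 < alpha G ℓ := by
  classical
  have hdeg1 : ∀ v : V, 1 ≤ (G.neighborSet v).ncard := fun v => le_trans one_le_two (hdeg v)
  obtain ⟨K₀, hK₀⟩ := hbdd
  set K := max K₀ 1 with hKdef
  have hK : ∀ e ∈ G.edgeSet, ℓ e ≤ K := fun e he =>
    le_trans (hK₀ ⟨e, he, rfl⟩) (le_max_left _ _)
  have hKpos : (0 : ℝ) < K := lt_of_lt_of_le one_pos (le_max_right _ _)
  set c₀ := min ε (1 / M₀) with hc₀def
  have hc₀ : 0 < c₀ := lt_min hε (by positivity)
  have hc₀ε : c₀ ≤ ε := min_le_left _ _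
  have hc₀M : c₀ * M₀ ≤ 1 := by
    calc c₀ * M₀ ≤ (1 / M₀) * M₀ := mul_le_mul_of_nonneg_right (min_le_right _ _) hM₀.le
      _ = 1 := by field_simp
  have hav2 : ∀ C : Set V, C.Finite → C.Nonempty → (G.induce C).Connected →
      M₀ ≤ mes ℓ (Medges G C) →
      ε * mes ℓ (Medges G C) ≤ ∑ᶠ e ∈ Medges G C, cVal G ℓ e * ℓ e := by
    intro C hCf hCne hCc hM
    have h := hav C hCf hCne hCc
    rw [star_edgeSet G C] at h
    exact h hM
  set D := 1 / c₀ + K with hDdef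
  have hD : 0 < D := by positivity
  set S := {x | ∃ H : G.Subgraph, H.verts.Finite ∧ H.Connected ∧ H.edgeSet.Nonempty ∧
    x = degBdry G H / mes ℓ H.edgeSet} with hS
  -- nonempty
  have hSne : S.Nonempty := by
    have v := Classical.arbitrary V
    have hnb : (G.neighborSet v).Nonempty := by
      rw [← Set.ncard_pos (hlf v)]
      exact lt_of_lt_of_le two_pos (hdeg v)
    obtain ⟨w, hw⟩ := hnb
    have hadj : G.Adj v w := hw
    refine ⟨_, G.subgraphOfAdj hadj, ?_, ?_, ?_, rfl⟩
    · have : (G.subgraphOfAdj hadj).verts = {v, w} := rfl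
      rw [this]
      exact (Set.finite_singleton w).insert v
    · exact SimpleGraph.Subgraph.subgraphOfAdj_connected hadj
    · refine ⟨s(v, w), ?_⟩
      rw [SimpleGraph.Subgraph.mem_edgeSet]
      simp
  -- lower bound
  have hbound : ∀ x ∈ S, 1 / D ≤ x := by
    rintro x ⟨H, hHfin, hHconn, hHne, rfl⟩
    have hEfin : H.edgeSet.Finite :=
      (Medges_finite G hlf hHfin).subset (subgraph_edgeSet_sub H)
    have hEsub : H.edgeSet ⊆ G.edgeSet := fun e he => (subgraph_edgeSet_sub H he).1
    have hmespos : 0 < mes ℓ H.edgeSet := mes_pos hpos hEsub hEfin hHne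
    have hmb := main_bound hlf hpos hdeg1 hconn hacyc hc₀ε hc₀M hc₀ hK hKpos hav2 H hHfin hHconn
    rw [le_div_iff₀ hmespos]
    calc (1 / D) * mes ℓ H.edgeSet ≤ (1 / D) * (D * degBdry G H) := by
          apply mul_le_mul_of_nonneg_left hmb
          positivity
      _ = degBdry G H := by field_simp
  rw [alpha]
  exact lt_of_lt_of_le (by positivity : (0:ℝ) < 1 / D) (le_csInf hSne hbound)
end
end

section
/- Let G = (V,E) be an infinite, locally finite tree (a connected acyclic simple graph) in which every vertex has degree at least 3, equipped with edge lengths ℓ : E → (0,∞). For an edge e with endpoints u and v set c(e) := 1/ℓ(e) − 1/m(u) − 1/m(v). Suppose there exist real numbers c₀ > 0 and M such that c(e) ≥ c₀ for all e ∈ E and m(v) ≤ M·ℓ(e) for every vertex v and every edge e ∈ E_v. Then α(G) ≥ c₀·M/(M−1) > 0. -/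
open scoped BigOperators

noncomputable section

variable {V : Type*}

open SimpleGraph in
theorem my_edgeSet_finite {G : SimpleGraph V} (H : G.Subgraph) (hfin : H.verts.Finite) :
    H.edgeSet.Finite := by
  apply Set.Finite.subset (((hfin.prod hfin).image (fun p => s(p.1, p.2))))
  rintro e he
  induction e with
  | h u v =>
    have h' : H.Adj u v := he
    exact ⟨(u, v), ⟨H.edge_vert h', H.edge_vert h'.symm⟩, rfl⟩

open SimpleGraph in
theorem my_incid_image {G : SimpleGraph V} (H : G.Subgraph) (v : V) :
    H.incidenceSet v = (fun w => s(v, w)) '' H.neighborSet v := by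
  ext e
  constructor
  · rintro ⟨he, hv⟩
    obtain ⟨w, rfl⟩ := Sym2.mem_iff_exists.mp hv
    exact ⟨w, SimpleGraph.Subgraph.mem_edgeSet.mp he, rfl⟩
  · rintro ⟨w, hw, rfl⟩
    exact ⟨SimpleGraph.Subgraph.mem_edgeSet.mpr hw, Sym2.mem_mk_left v w⟩

open SimpleGraph in
theorem my_ncard_incid {G : SimpleGraph V} (H : G.Subgraph) (v : V) :
    (H.incidenceSet v).ncard = (H.neighborSet v).ncard := by
  rw [my_incid_image]
  exact Set.ncard_image_of_injective _ (fun a b h => Sym2.congr_right.mp h)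

open SimpleGraph in
theorem my_incid_imageG (G : SimpleGraph V) (v : V) :
    G.incidenceSet v = (fun w => s(v, w)) '' G.neighborSet v := by
  ext e
  constructor
  · rintro ⟨he, hv⟩
    obtain ⟨w, rfl⟩ := Sym2.mem_iff_exists.mp hv
    exact ⟨w, (G.mem_edgeSet).mp he, rfl⟩
  · rintro ⟨w, hw, rfl⟩
    exact ⟨(G.mem_edgeSet).mpr hw, Sym2.mem_mk_left v w⟩

open SimpleGraph in
theorem my_incidG_finite (G : SimpleGraph V) (hlf : ∀ v : V, (G.neighborSet v).Finite) (v : V) :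
    (G.incidenceSet v).Finite := by
  rw [my_incid_imageG]; exact (hlf v).image _

theorem my_mval_eq_sum (G : SimpleGraph V) (ℓ : Sym2 V → ℝ)
    (hlf : ∀ v : V, (G.neighborSet v).Finite) (v : V) :
    mval G ℓ v = ∑ e ∈ (my_incidG_finite G hlf v).toFinset, ℓ e :=
  finsum_mem_eq_finite_toFinset_sum _ _

theorem my_incid_nonempty (G : SimpleGraph V) (hlf : ∀ v : V, (G.neighborSet v).Finite)
    (hdeg : ∀ v : V, 3 ≤ (G.neighborSet v).ncard) (v : V) :
    ((my_incidG_finite G hlf v).toFinset).Nonempty := by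
  have h3 := hdeg v
  have : (G.neighborSet v).Nonempty := by rw [← Set.ncard_pos (hlf v)]; omega
  obtain ⟨w, hw⟩ := this
  exact ⟨s(v, w), by rw [Set.Finite.mem_toFinset, my_incid_imageG]; exact ⟨w, hw, rfl⟩⟩

theorem my_mval_pos (G : SimpleGraph V) (ℓ : Sym2 V → ℝ)
    (hlf : ∀ v : V, (G.neighborSet v).Finite)
    (hdeg : ∀ v : V, 3 ≤ (G.neighborSet v).ncard)
    (hpos : ∀ e ∈ G.edgeSet, 0 < ℓ e) (v : V) : 0 < mval G ℓ v := by
  rw [my_mval_eq_sum G ℓ hlf]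
  exact Finset.sum_pos (fun e he => hpos e (((my_incidG_finite G hlf v).mem_toFinset.mp he).1))
    (my_incid_nonempty G hlf hdeg v)

theorem my_three_le_M (G : SimpleGraph V) (ℓ : Sym2 V → ℝ)
    (hlf : ∀ v : V, (G.neighborSet v).Finite)
    (hdeg : ∀ v : V, 3 ≤ (G.neighborSet v).ncard)
    (hpos : ∀ e ∈ G.edgeSet, 0 < ℓ e) (M : ℝ)
    (hM : ∀ v : V, ∀ e ∈ G.incidenceSet v, mval G ℓ v ≤ M * ℓ e)
    (v : V) : 3 ≤ M := by
  classical
  obtain ⟨e, he, hmin⟩ := Finset.exists_min_image _ ℓ (my_incid_nonempty G hlf hdeg v)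
  have hcard : 3 ≤ (my_incidG_finite G hlf v).toFinset.card := by
    rw [← Set.ncard_eq_toFinset_card _ (my_incidG_finite G hlf v)]
    have h2 : (G.incidenceSet v).ncard = (G.neighborSet v).ncard := by
      rw [my_incid_imageG]
      exact Set.ncard_image_of_injective _ (fun a b h => Sym2.congr_right.mp h)
    have h3 := hdeg v
    omega
  have hepos : 0 < ℓ e := hpos e ((my_incidG_finite G hlf v).mem_toFinset.mp he).1
  have hsum : 3 * ℓ e ≤ mval G ℓ v := by
    rw [my_mval_eq_sum G ℓ hlf]
    calc (3:ℝ) * ℓ e ≤ ((my_incidG_finite G hlf v).toFinset.card : ℝ) * ℓ e := by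
          have h4 : (3:ℝ) ≤ ((my_incidG_finite G hlf v).toFinset.card : ℝ) := by
            exact_mod_cast hcard
          nlinarith
      _ = ∑ _f ∈ (my_incidG_finite G hlf v).toFinset, ℓ e := by
          rw [Finset.sum_const, nsmul_eq_mul]
      _ ≤ ∑ f ∈ (my_incidG_finite G hlf v).toFinset, ℓ f :=
          Finset.sum_le_sum (fun f hf => hmin f hf)
  have hMe := hM v e ((my_incidG_finite G hlf v).mem_toFinset.mp he)
  nlinarith

open SimpleGraph in
theorem my_nb_nonempty {G : SimpleGraph V} (H : G.Subgraph) (hconn : H.Connected)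
    (hne : H.edgeSet.Nonempty) {v : V} (hv : v ∈ H.verts) :
    (H.neighborSet v).Nonempty := by
  obtain ⟨e, he⟩ := hne
  induction e with
  | h u w =>
    have hadj : H.Adj u w := he
    by_cases huv : v = u
    · exact ⟨w, huv ▸ hadj⟩
    · have hreach := hconn.coe.preconnected ⟨v, hv⟩ ⟨u, H.edge_vert hadj⟩
      obtain ⟨p⟩ := hreach
      have hnn : ¬ p.Nil := SimpleGraph.Walk.not_nil_of_ne (by simp [huv])
      have hadj1 : H.coe.Adj ⟨v, hv⟩ (p.getVert 1) := p.adj_snd hnn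
      exact ⟨((p.getVert 1) : V), hadj1⟩

open SimpleGraph in
theorem my_interior_incid {G : SimpleGraph V} (H : G.Subgraph)
    (hlf : ∀ v : V, (G.neighborSet v).Finite) {v : V} (hv : v ∈ H.verts)
    (hnb : v ∉ bdry G H) : H.incidenceSet v = G.incidenceSet v := by
  have hsub : H.neighborSet v ⊆ G.neighborSet v := H.neighborSet_subset v
  have hle : (G.neighborSet v).ncard ≤ (H.neighborSet v).ncard := by
    by_contra h
    exact hnb ⟨hv, by omega⟩
  have heq : H.neighborSet v = G.neighborSet v :=
    Set.eq_of_subset_of_ncard_le hsub hle (hlf v)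
  ext e
  constructor
  · rintro ⟨he, hem⟩
    exact ⟨H.edgeSet_subset he, hem⟩
  · rintro ⟨he, hem⟩
    obtain ⟨w, rfl⟩ := Sym2.mem_iff_exists.mp hem
    have : w ∈ H.neighborSet v := heq ▸ (G.mem_edgeSet.mp he)
    exact ⟨SimpleGraph.Subgraph.mem_edgeSet.mpr this, Sym2.mem_mk_left v w⟩

open SimpleGraph in
theorem my_coe_acyclic {G : SimpleGraph V} (hacyc : G.IsAcyclic) (H : G.Subgraph) :
    H.coe.IsAcyclic := by
  intro v c hc
  exact hacyc (c.map H.hom) ((SimpleGraph.Walk.map_isCycle_iff_of_injective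
    (f := H.hom) Subtype.val_injective).mpr hc)

open SimpleGraph in
theorem my_tree_count {G : SimpleGraph V} (hacyc : G.IsAcyclic) (H : G.Subgraph)
    (hfin : H.verts.Finite) (hconn : H.Connected) :
    H.edgeSet.ncard + 1 = H.verts.ncard := by
  classical
  haveI : Fintype H.verts := hfin.fintype
  haveI : Finite ↥H.coe.edgeSet := Subtype.finite
  haveI : Fintype ↥H.coe.edgeSet := Fintype.ofFinite _
  have htree : H.coe.IsTree := ⟨hconn.coe, my_coe_acyclic hacyc H⟩
  have h1 := htree.card_edgeFinset
  have h2 : H.edgeSet.ncard = H.coe.edgeFinset.card := by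
    rw [← SimpleGraph.Subgraph.image_coe_edgeSet_coe,
      Set.ncard_image_of_injective _ (Sym2.map.injective Subtype.val_injective),
      Set.ncard_eq_toFinset_card', SimpleGraph.edgeFinset]
  have h3 : H.verts.ncard = Fintype.card H.verts := by
    rw [Set.ncard_eq_toFinset_card']
    exact Set.toFinset_card _
  omega

open SimpleGraph in
theorem my_cVal_mul {G : SimpleGraph V} {ℓ : Sym2 V → ℝ} {u v : V} (huv : G.Adj u v)
    (hl : ℓ s(u,v) ≠ 0) :
    cVal G ℓ s(u,v) * ℓ s(u,v) = 1 - (ℓ s(u,v) / mval G ℓ u + ℓ s(u,v) / mval G ℓ v) := by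
  have hset : {w : V | w ∈ s(u,v)} = ({u, v} : Set V) := by
    ext w; simp [Sym2.mem_iff]
  have hpair : (∑ᶠ w ∈ {w : V | w ∈ s(u,v)}, 1 / mval G ℓ w)
      = 1 / mval G ℓ u + 1 / mval G ℓ v := by
    rw [hset]; exact finsum_mem_pair huv.ne
  rw [cVal, hpair]
  field_simp


open SimpleGraph in
theorem my_key {G : SimpleGraph V}
    (hacyc : G.IsAcyclic)
    (hlf : ∀ v : V, (G.neighborSet v).Finite)
    (hdeg : ∀ v : V, 3 ≤ (G.neighborSet v).ncard)
    {ℓ : Sym2 V → ℝ} (hpos : ∀ e ∈ G.edgeSet, 0 < ℓ e)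
    {c₀ M : ℝ} (hc₀ : 0 < c₀) (hM3 : 3 ≤ M)
    (hc : ∀ e ∈ G.edgeSet, c₀ ≤ cVal G ℓ e)
    (hM : ∀ v : V, ∀ e ∈ G.incidenceSet v, mval G ℓ v ≤ M * ℓ e)
    (H : G.Subgraph) (hfin : H.verts.Finite) (hconn : H.Connected)
    (hne : H.edgeSet.Nonempty) :
    c₀ * mes ℓ H.edgeSet ≤ degBdry G H * (M - 1) / M ∧ 0 < mes ℓ H.edgeSet := by
  classical
  have hEfin : H.edgeSet.Finite := my_edgeSet_finite H hfin
  set Ef : Finset (Sym2 V) := hEfin.toFinset with hEf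
  set Vf : Finset V := hfin.toFinset with hVf
  have hmemE : ∀ e ∈ Ef, e ∈ H.edgeSet := fun e he => hEfin.mem_toFinset.mp he
  have hmemG : ∀ e ∈ Ef, e ∈ G.edgeSet := fun e he => H.edgeSet_subset (hmemE e he)
  have hmesf : mes ℓ H.edgeSet = ∑ e ∈ Ef, ℓ e := finsum_mem_eq_finite_toFinset_sum _ _
  have hmespos : 0 < mes ℓ H.edgeSet := by
    rw [hmesf]
    apply Finset.sum_pos (fun e he => hpos e (hmemG e he))
    exact ⟨hne.choose, hEfin.mem_toFinset.mpr hne.choose_spec⟩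
  refine ⟨?_, hmespos⟩
  have hMpos : (0:ℝ) < M := by linarith
  -- inner sums
  set inner : Sym2 V → ℝ := fun e => ∑ v ∈ Vf.filter (· ∈ e), ℓ e / mval G ℓ v with hinner
  -- claim 1
  have claim1 : ∀ e ∈ Ef, cVal G ℓ e * ℓ e = 1 - inner e := by
    intro e he
    induction e with
    | h u v =>
      have hadj : H.Adj u v := hmemE _ he
      have hGadj : G.Adj u v := H.adj_sub hadj
      have hfil : Vf.filter (· ∈ s(u,v)) = {u, v} := by
        ext w
        simp only [Finset.mem_filter, Finset.mem_insert, Finset.mem_singleton, Sym2.mem_iff,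
          hVf, Set.Finite.mem_toFinset]
        constructor
        · rintro ⟨_, h⟩; exact h
        · rintro (rfl | rfl)
          · exact ⟨H.edge_vert hadj, Or.inl rfl⟩
          · exact ⟨H.edge_vert hadj.symm, Or.inr rfl⟩
      rw [hinner]
      simp only [hfil]
      rw [Finset.sum_pair hGadj.ne]
      exact my_cVal_mul hGadj (ne_of_gt (hpos _ (hmemG _ he)))
  -- claim 2 : swap
  have claim2 : ∑ e ∈ Ef, inner e
      = ∑ v ∈ Vf, ∑ e ∈ Ef.filter (fun e => v ∈ e), ℓ e / mval G ℓ v := by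
    rw [hinner]
    simp only [Finset.sum_filter]
    exact Finset.sum_comm
  set Sv : V → Finset (Sym2 V) := fun v => Ef.filter (fun e => v ∈ e) with hSv
  have hSvset : ∀ v, (Sv v : Set (Sym2 V)) = H.incidenceSet v := by
    intro v
    ext e
    simp only [hSv, Finset.coe_filter, Set.mem_setOf_eq, hEf, Set.Finite.mem_toFinset]
    rfl
  have hSvcard : ∀ v, (Sv v).card = (H.neighborSet v).ncard := by
    intro v
    rw [← my_ncard_incid H v, ← hSvset v, Set.ncard_coe_finset]
  -- claim 4 : general lower bound
  have claim4 : ∀ v ∈ Vf, ((H.neighborSet v).ncard : ℝ) / M ≤ ∑ e ∈ Sv v, ℓ e / mval G ℓ v := by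
    intro v hv
    have hterm : ∀ e ∈ Sv v, 1 / M ≤ ℓ e / mval G ℓ v := by
      intro e he
      have heH : e ∈ H.edgeSet := hmemE e (Finset.mem_of_mem_filter e he)
      have hve : v ∈ e := (Finset.mem_filter.mp he).2
      have heGi : e ∈ G.incidenceSet v := ⟨H.edgeSet_subset heH, hve⟩
      have h1 := hM v e heGi
      have h2 := my_mval_pos G ℓ hlf hdeg hpos v
      rw [div_le_div_iff₀ hMpos h2]
      linarith
    calc ((H.neighborSet v).ncard : ℝ) / M = (Sv v).card • (1/M) := by
          rw [hSvcard v, nsmul_eq_mul]; ring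
      _ ≤ ∑ e ∈ Sv v, ℓ e / mval G ℓ v := by
          rw [← Finset.sum_const]
          exact Finset.sum_le_sum hterm
  -- claim 5 : interior
  have claim5 : ∀ v ∈ Vf, v ∉ bdry G H → ∑ e ∈ Sv v, ℓ e / mval G ℓ v = 1 := by
    intro v hv hnb
    have hvv : v ∈ H.verts := hfin.mem_toFinset.mp hv
    have h1 : (Sv v : Set (Sym2 V)) = G.incidenceSet v := by
      rw [hSvset v]; exact my_interior_incid H hlf hvv hnb
    have h2 : Sv v = (my_incidG_finite G hlf v).toFinset := by
      apply Finset.coe_injective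
      rw [h1, Set.Finite.coe_toFinset]
    rw [h2, ← Finset.sum_div, ← my_mval_eq_sum G ℓ hlf v,
      div_self (ne_of_gt (my_mval_pos G ℓ hlf hdeg hpos v))]
  -- boundary finset
  have hbsub : bdry G H ⊆ H.verts := fun v hv => hv.1
  have hbfin : (bdry G H).Finite := hfin.subset hbsub
  set B : Finset V := Vf.filter (· ∈ bdry G H) with hB
  have hBeq : hbfin.toFinset = B := by
    ext v
    simp only [Set.Finite.mem_toFinset, hB, Finset.mem_filter, hVf, Set.Finite.mem_toFinset]
    exact ⟨fun h => ⟨hbsub h, h⟩, fun h => h.2⟩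
  have hD : degBdry G H = ∑ v ∈ B, ((H.neighborSet v).ncard : ℝ) := by
    rw [degBdry, finsum_mem_eq_finite_toFinset_sum _ hbfin, hBeq]
  set D : ℝ := ∑ v ∈ B, ((H.neighborSet v).ncard : ℝ) with hDdef
  have hDnn : ∀ v ∈ B, (1:ℝ) ≤ ((H.neighborSet v).ncard : ℝ) := by
    intro v hv
    have hvv : v ∈ H.verts := hbsub (Finset.mem_filter.mp hv).2
    have hnbne := my_nb_nonempty H hconn hne hvv
    have hnfin : (H.neighborSet v).Finite := (hlf v).subset (H.neighborSet_subset v)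
    have := (Set.ncard_pos hnfin).mpr hnbne
    exact_mod_cast this
  have hBcard : (B.card : ℝ) ≤ D := by
    calc (B.card : ℝ) = ∑ _v ∈ B, (1:ℝ) := by rw [Finset.sum_const, nsmul_eq_mul]; ring
      _ ≤ D := Finset.sum_le_sum hDnn
  -- counting
  have hcount : Ef.card + 1 = Vf.card := by
    have := my_tree_count hacyc H hfin hconn
    rwa [Set.ncard_eq_toFinset_card _ hEfin, Set.ncard_eq_toFinset_card _ hfin] at this
  have hsplit : B.card + (Vf.filter (fun v => ¬ v ∈ bdry G H)).card = Vf.card :=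
    Finset.card_filter_add_card_filter_not _
  set I : Finset V := Vf.filter (fun v => ¬ v ∈ bdry G H) with hI
  -- main chain
  have main : c₀ * mes ℓ H.edgeSet ≤ (Ef.card : ℝ) - ((I.card : ℝ) + D / M) := by
    have h1 : c₀ * mes ℓ H.edgeSet ≤ ∑ e ∈ Ef, cVal G ℓ e * ℓ e := by
      rw [hmesf, Finset.mul_sum]
      apply Finset.sum_le_sum
      intro e he
      exact mul_le_mul_of_nonneg_right (hc e (hmemG e he)) (hpos e (hmemG e he)).le
    have h2 : ∑ e ∈ Ef, cVal G ℓ e * ℓ e = (Ef.card : ℝ) - ∑ e ∈ Ef, inner e := by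
      rw [Finset.sum_congr rfl claim1, Finset.sum_sub_distrib, Finset.sum_const, nsmul_eq_mul,
        mul_one]
    have h3 : (I.card : ℝ) + D / M ≤ ∑ e ∈ Ef, inner e := by
      rw [claim2, ← Finset.sum_filter_add_sum_filter_not Vf (· ∈ bdry G H)]
      have hIb : (I.card : ℝ) ≤ ∑ v ∈ I, ∑ e ∈ Sv v, ℓ e / mval G ℓ v := by
        calc (I.card : ℝ) = ∑ _v ∈ I, (1:ℝ) := by rw [Finset.sum_const, nsmul_eq_mul]; ring
          _ ≤ _ := by
            apply Finset.sum_le_sum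
            intro v hv
            rw [claim5 v (Finset.mem_of_mem_filter v hv) (Finset.mem_filter.mp hv).2]
        
      have hBb : D / M ≤ ∑ v ∈ B, ∑ e ∈ Sv v, ℓ e / mval G ℓ v := by
        rw [hDdef, Finset.sum_div]
        exact Finset.sum_le_sum (fun v hv => claim4 v (Finset.mem_of_mem_filter v hv))
      rw [add_comm]
      exact add_le_add hBb hIb
    linarith
  -- conclude
  have hcard : (Ef.card : ℝ) = (B.card : ℝ) + (I.card : ℝ) - 1 := by
    have : Ef.card + 1 = B.card + I.card := by omega
    have h' : ((Ef.card : ℝ) + 1) = (B.card : ℝ) + (I.card : ℝ) := by exact_mod_cast this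
    linarith
  have final : c₀ * mes ℓ H.edgeSet ≤ D - D / M := by
    have := main
    rw [hcard] at this
    linarith
  rw [hD]
  have : D - D / M = D * (M - 1) / M := by field_simp
  linarith [this ▸ final]


/-- Theorem 3.2 for trees: if `c(e) ≥ c₀ > 0` for all edges and
`m(v) ≤ M·ℓ(e)` for every vertex `v` and edge `e` incident to `v`, then
`α(G) ≥ c₀·M/(M−1) > 0`. -/
theorem statement_15 {V : Type*} [Infinite V] (G : SimpleGraph V)
    (hconn : G.Connected) (hacyc : G.IsAcyclic)
    (hlf : ∀ v : V, (G.neighborSet v).Finite)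
    (hdeg : ∀ v : V, 3 ≤ (G.neighborSet v).ncard)
    (ℓ : Sym2 V → ℝ) (hpos : ∀ e ∈ G.edgeSet, 0 < ℓ e)
    (c₀ M : ℝ) (hc₀ : 0 < c₀)
    (hc : ∀ e ∈ G.edgeSet, c₀ ≤ cVal G ℓ e)
    (hM : ∀ v : V, ∀ e ∈ G.incidenceSet v, mval G ℓ v ≤ M * ℓ e) :
    c₀ * M / (M - 1) ≤ alpha G ℓ ∧ 0 < c₀ * M / (M - 1) := by
  classical
  have hM3 : 3 ≤ M := my_three_le_M G ℓ hlf hdeg hpos M hM (Classical.arbitrary V)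
  have hMpos : (0:ℝ) < M := by linarith
  have hM1 : (0:ℝ) < M - 1 := by linarith
  have hgoalpos : 0 < c₀ * M / (M - 1) := div_pos (by nlinarith) hM1
  refine ⟨?_, hgoalpos⟩
  apply le_csInf
  · -- nonempty
    set v := Classical.arbitrary V with hv
    have h3 := hdeg v
    have hnbne : (G.neighborSet v).Nonempty := by rw [← Set.ncard_pos (hlf v)]; omega
    obtain ⟨w, hw⟩ := hnbne
    have hadj : G.Adj v w := hw
    refine ⟨_, G.subgraphOfAdj hadj, ?_, SimpleGraph.Subgraph.subgraphOfAdj_connected hadj, ?_, rfl⟩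
    · exact (Set.finite_singleton w).insert v
    · exact ⟨s(v, w), by rw [SimpleGraph.Subgraph.mem_edgeSet]; simp⟩
  · rintro x ⟨H, hfin, hconn', hne, rfl⟩
    obtain ⟨hkey, hmespos⟩ := my_key hacyc hlf hdeg hpos hc₀ hM3 hc hM H hfin hconn' hne
    rw [div_le_div_iff₀ hM1 hmespos]
    have heq : degBdry G H * (M - 1) / M * M = degBdry G H * (M - 1) :=
      div_mul_cancel₀ _ (ne_of_gt hMpos)
    nlinarith [mul_le_mul_of_nonneg_right hkey hMpos.le, heq]
end
end
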